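/- Let c > c̄ > 0, d ≥ 0, t₀ ≥ 0, and let V : [t₀, ∞) → ℝ satisfy V' (t) ≤ −c·V(t) + u(t) + d where u(t) ≥ 0. Let r solve r' = −c̄·r + ū(t) + d with r(t₀) = r₀ > 0 and ū(t) ≥ u(t). Then V(t) ≤ r(t) + D(t₀, t) for all t ≥ t₀, where D(t₀, t) = max{0, e^{−c(t−t₀)}V(t₀) − e^{−c̄(t−t₀)}r₀}. -/

import Mathlib

theorem stmt_11 (c cbar d t₀ r₀ : ℝ) (hc : cbar < c) (hcbar : 0 < cbar)
    (hd : 0 ≤ d) (hr₀ : 0 < r₀)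
    (V V' u ubar r : ℝ → ℝ)
    (hu_cont : Continuous u) (hubar_cont : Continuous ubar)
    (hu : ∀ t, 0 ≤ u t) (hdom : ∀ t, u t ≤ ubar t)
    (hV : ∀ t, t₀ ≤ t → HasDerivAt V (V' t) t)
    (hV' : ∀ t, t₀ ≤ t → V' t ≤ -c * V t + u t + d)
    (hr : ∀ t, t₀ ≤ t → HasDerivAt r (-cbar * r t + ubar t + d) t)
    (hr0 : r t₀ = r₀) :
    ∀ t, t₀ ≤ t →
      V t ≤ r t +
        max 0 (Real.exp (-c * (t - t₀)) * V t₀ - Real.exp (-cbar * (t - t₀)) * r₀) := by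
  intro t ht
  have hc0 : (0:ℝ) < c := hcbar.trans hc
  have hcontA : Continuous fun s => Real.exp (c*s) * (u s + d) := by continuity
  have hcontB : Continuous fun s => Real.exp (cbar*s) * (ubar s + d) := by continuity
  set A := ∫ s in t₀..t, Real.exp (c*s) * (u s + d) with hAdef
  set B := ∫ s in t₀..t, Real.exp (cbar*s) * (ubar s + d) with hBdef
  -- step 2: exact value of B via FTC
  have hB : B = Real.exp (cbar*t) * r t - Real.exp (cbar*t₀) * r₀ := by
    rw [hBdef, ← hr0]
    apply intervalIntegral.integral_eq_sub_of_hasDerivAt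
    · intro s hs
      rw [Set.uIcc_of_le ht] at hs
      have h1 : HasDerivAt (fun x => Real.exp (cbar*x)) (cbar * Real.exp (cbar*s)) s := by
        simpa [mul_comm, Function.comp_def] using (Real.hasDerivAt_exp (cbar*s)).comp s
          ((hasDerivAt_id s).const_mul cbar)
      have h2 := h1.mul (hr s hs.1)
      refine h2.congr_deriv ?_
      ring
    · exact hcontB.intervalIntegrable _ _
  -- step 1: Gronwall-type estimate for V
  have hgderiv : ∀ s ∈ Set.Ici t₀, HasDerivAt
      (fun x => (∫ y in t₀..x, Real.exp (c*y) * (u y + d)) - Real.exp (c*x) * V x)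
      (Real.exp (c*s) * (u s + d) - (c * Real.exp (c*s) * V s + Real.exp (c*s) * V' s)) s := by
    intro s hs
    have h1 : HasDerivAt (fun x => ∫ y in t₀..x, Real.exp (c*y) * (u y + d))
        (Real.exp (c*s) * (u s + d)) s := (hcontA.integral_hasStrictDerivAt t₀ s).hasDerivAt
    have he : HasDerivAt (fun x => Real.exp (c*x)) (c * Real.exp (c*s)) s := by
      simpa [mul_comm, Function.comp_def] using (Real.hasDerivAt_exp (c*s)).comp s
        ((hasDerivAt_id s).const_mul c)
    have h2 := he.mul (hV s hs)
    exact h1.sub h2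
  have hmono : MonotoneOn
      (fun x => (∫ y in t₀..x, Real.exp (c*y) * (u y + d)) - Real.exp (c*x) * V x)
      (Set.Ici t₀) := by
    apply monotoneOn_of_deriv_nonneg (convex_Ici t₀)
    · exact fun s hs => ((hgderiv s hs).continuousAt).continuousWithinAt
    · intro s hs
      exact ((hgderiv s (interior_subset hs)).differentiableAt).differentiableWithinAt
    · intro s hs
      rw [(hgderiv s (interior_subset hs)).deriv]
      have hs' : t₀ ≤ s := le_of_lt (by simpa using hs)
      have h3 := hV' s hs'
      have hep : (0:ℝ) < Real.exp (c*s) := Real.exp_pos _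
      nlinarith [mul_le_mul_of_nonneg_left h3 hep.le]
  have key : Real.exp (c*t) * V t ≤ Real.exp (c*t₀) * V t₀ + A := by
    have := hmono (Set.mem_Ici.mpr le_rfl) ht ht
    simp only [intervalIntegral.integral_same] at this
    rw [← hAdef] at this
    linarith
  -- step 3: A ≤ exp((c-cbar)t) * B
  have hA_le : A ≤ Real.exp ((c-cbar)*t) * B := by
    have hconst : Real.exp ((c-cbar)*t) * B
        = ∫ s in t₀..t, Real.exp ((c-cbar)*t) * (Real.exp (cbar*s) * (ubar s + d)) := by
      rw [hBdef, intervalIntegral.integral_const_mul]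
    rw [hconst, hAdef]
    apply intervalIntegral.integral_mono_on ht (hcontA.intervalIntegrable _ _)
      ((continuous_const.mul hcontB).intervalIntegrable _ _)
    intro s hs
    have hud : u s + d ≤ ubar s + d := by linarith [hdom s]
    have hud0 : 0 ≤ u s + d := by linarith [hu s]
    have hexp : Real.exp (c*s) ≤ Real.exp ((c-cbar)*t) * Real.exp (cbar*s) := by
      rw [← Real.exp_add, Real.exp_le_exp]
      nlinarith [hs.2]
    calc Real.exp (c*s) * (u s + d) ≤ (Real.exp ((c-cbar)*t) * Real.exp (cbar*s)) * (u s + d) :=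
          mul_le_mul_of_nonneg_right hexp hud0
      _ ≤ (Real.exp ((c-cbar)*t) * Real.exp (cbar*s)) * (ubar s + d) := by
          apply mul_le_mul_of_nonneg_left hud
          positivity
      _ = Real.exp ((c-cbar)*t) * (Real.exp (cbar*s) * (ubar s + d)) := by ring
  -- combine
  have hmain : V t ≤ r t + (Real.exp (-c*(t-t₀)) * V t₀ - Real.exp (-cbar*(t-t₀)) * r₀) := by
    have hepos : (0:ℝ) < Real.exp (c*t) := Real.exp_pos _
    have step : Real.exp (c*t) * V t
        ≤ Real.exp (c*t₀) * V t₀ + Real.exp ((c-cbar)*t) *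
            (Real.exp (cbar*t) * r t - Real.exp (cbar*t₀) * r₀) := by
      rw [← hB]; linarith
    have hmul := mul_le_mul_of_nonneg_left step (Real.exp_nonneg (-(c*t)))
    have e1 : Real.exp (-(c*t)) * Real.exp (c*t) = 1 := by
      rw [← Real.exp_add, show -(c*t)+c*t = 0 by ring, Real.exp_zero]
    have e3 : Real.exp (-(c*t)) * (Real.exp ((c-cbar)*t) * Real.exp (cbar*t)) = 1 := by
      rw [← Real.exp_add, ← Real.exp_add, show -(c*t)+((c-cbar)*t+cbar*t) = 0 by ring,
        Real.exp_zero]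
    calc V t = Real.exp (-(c*t)) * (Real.exp (c*t) * V t) := by
          rw [← mul_assoc, e1, one_mul]
      _ ≤ Real.exp (-(c*t)) * (Real.exp (c*t₀) * V t₀ + Real.exp ((c-cbar)*t) *
            (Real.exp (cbar*t) * r t - Real.exp (cbar*t₀) * r₀)) := hmul
      _ = r t + (Real.exp (-c*(t-t₀)) * V t₀ - Real.exp (-cbar*(t-t₀)) * r₀) := by
          rw [show -c*(t-t₀) = -(c*t)+c*t₀ by ring,
            show -cbar*(t-t₀) = -(c*t)+((c-cbar)*t+cbar*t₀) by ring,
            Real.exp_add, Real.exp_add, Real.exp_add]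
          linear_combination (r t) * e3
  calc V t ≤ r t + (Real.exp (-c*(t-t₀)) * V t₀ - Real.exp (-cbar*(t-t₀)) * r₀) := hmain
    _ ≤ _ := by gcongr; exact le_max_right _ _
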